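/- Let T: ℝ₊ → ℝ₊ be a map with T(x) = τ₀(x) on I₀ = (a₁,∞), where τ₀ is C¹, τ₀' > 1, and suppose T is exact with respect to Lebesgue measure. Then τ₀(x) < x for all x ∈ I₀. -/

import Mathlib

open Real Filter Set MeasureTheory

/-- let `T : ℝ₊ → ℝ₊` coincide on `I₀ = (a₁,∞)` with a `C¹`
function `τ₀` whose derivative is `> 1` there, and suppose `T` is exact w.r.t.
Lebesgue measure on `ℝ₊` (every tail-measurable set is null or conull).
Then `τ₀(x) < x` for all `x ∈ I₀`. -/
theorem stmt_12 (a₁ : ℝ) (ha₁ : 0 ≤ a₁) (T τ₀ : ℝ → ℝ)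
    (hTm : Measurable T) (hTmaps : MapsTo T (Ici 0) (Ici 0))
    (hTτ : ∀ x ∈ Ioi a₁, T x = τ₀ x)
    (hC1 : ContDiffOn ℝ 1 τ₀ (Ioi a₁))
    (hd : ∀ x ∈ Ioi a₁, 1 < deriv τ₀ x)
    (hexact : ∀ s : Set ℝ, MeasurableSet s →
      (∀ n : ℕ, ∃ t : Set ℝ, MeasurableSet t ∧ s = (T^[n]) ⁻¹' t) →
      volume.restrict (Ici 0) s = 0 ∨ volume.restrict (Ici 0) sᶜ = 0) :
    ∀ x ∈ Ioi a₁, τ₀ x < x := by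
  by_contra hcon
  push_neg at hcon
  obtain ⟨x₀, hx₀, hfix⟩ := hcon
  have hx₀' : a₁ < x₀ := hx₀
  have hsub : Ici x₀ ⊆ Ioi a₁ := fun y hy => show a₁ < y from lt_of_lt_of_le hx₀ hy
  have hdiffAt : ∀ y ∈ Ioi a₁, DifferentiableAt ℝ τ₀ y := fun y hy =>
    ((hC1.differentiableOn one_ne_zero) y hy).differentiableAt (isOpen_Ioi.mem_nhds hy)
  -- τ₀ strictly monotone on Ici x₀
  have hmono : StrictMonoOn τ₀ (Ici x₀) := by
    apply strictMonoOn_of_deriv_pos (convex_Ici x₀) (hC1.continuousOn.mono hsub)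
    intro y hy
    rw [interior_Ici] at hy
    have := hd y (hsub (mem_Ici.mpr (le_of_lt hy)))
    linarith
  -- τ₀ y > y for y > x₀
  have hgt : ∀ y, x₀ < y → y < τ₀ y := by
    have hg : StrictMonoOn (fun y => τ₀ y - y) (Ici x₀) := by
      apply strictMonoOn_of_deriv_pos (convex_Ici x₀)
      · exact (hC1.continuousOn.mono hsub).sub continuousOn_id
      · intro y hy
        rw [interior_Ici] at hy
        have hya : y ∈ Ioi a₁ := hsub (mem_Ici.mpr (le_of_lt hy))
        have hdy := hdiffAt y hya
        have hder : deriv (fun y => τ₀ y - y) y = deriv τ₀ y - 1 := by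
          rw [deriv_fun_sub hdy differentiableAt_fun_id]
          simp
        rw [hder]
        have := hd y hya
        linarith
    intro y hy
    have := hg (self_mem_Ici) (mem_Ici.mpr (le_of_lt hy)) hy
    simp only at this
    linarith
  -- the increasing sequence of iterates
  set c : ℕ → ℝ := fun n => τ₀^[n] (x₀ + 1) with hc
  have hc0 : c 0 = x₀ + 1 := rfl
  have hcsucc : ∀ n, c (n+1) = τ₀ (c n) := fun n => Function.iterate_succ_apply' τ₀ n _
  have hcx : ∀ n, x₀ < c n := by
    intro n
    induction n with
    | zero => rw [hc0]; linarith
    | succ n ih => rw [hcsucc]; exact lt_trans ih (hgt _ ih)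
  have hclt : ∀ n, c n < c (n+1) := fun n => by rw [hcsucc]; exact hgt _ (hcx n)
  have hcsm : StrictMono c := strictMono_nat_of_lt_succ hclt
  have hTa : ∀ y, x₀ < y → T y = τ₀ y := fun y hy => hTτ y (lt_trans hx₀ hy)
  -- interval shifting lemma
  have hA : ∀ n y, y ∈ Ico (c n) (c (n+1)) → T y ∈ Ico (c (n+1)) (c (n+1+1)) := by
    intro n y hy
    have hxy : x₀ < y := lt_of_lt_of_le (hcx n) hy.1
    rw [hTa y hxy]
    constructor
    · rw [hcsucc]
      exact hmono.monotoneOn (mem_Ici.mpr (le_of_lt (hcx n))) (mem_Ici.mpr (le_of_lt hxy)) hy.1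
    · rw [hcsucc (n+1)]
      exact hmono (mem_Ici.mpr (le_of_lt hxy)) (mem_Ici.mpr (le_of_lt (hcx (n+1)))) hy.2
  have hiter : ∀ N m y, y ∈ Ico (c m) (c (m+1)) → T^[N] y ∈ Ico (c (m+N)) (c (m+N+1)) := by
    intro N
    induction N with
    | zero => intro m y hy; simpa using hy
    | succ N ih =>
      intro m y hy
      have h1 := hA _ _ (ih m y hy)
      rw [Function.iterate_succ_apply']
      have e1 : m + (N+1) = m + N + 1 := by omega
      rw [e1]
      exact h1
  -- disjointness of the intervals
  have hdisj : ∀ m n y, y ∈ Ico (c m) (c (m+1)) → y ∈ Ico (c n) (c (n+1)) → m = n := by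
    intro m n y hm hn
    rcases lt_trichotomy m n with h | h | h
    · have : c (m+1) ≤ c n := hcsm.monotone (by omega)
      have := hm.2
      have := hn.1
      linarith
    · exact h
    · have : c (n+1) ≤ c m := hcsm.monotone (by omega)
      have := hn.2
      have := hm.1
      linarith
  -- the tail set
  set S : ℕ → Set ℝ := fun N => ⋃ k : ℕ, Ico (c (2*k + N)) (c (2*k + N + 1)) with hS
  set s : Set ℝ := ⋃ N : ℕ, T^[N] ⁻¹' S N with hs
  have hSm : ∀ N, MeasurableSet (S N) := fun N => MeasurableSet.iUnion fun k => measurableSet_Ico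
  have hitm : ∀ n : ℕ, Measurable (T^[n]) := fun n => hTm.iterate n
  have hsm : MeasurableSet s := MeasurableSet.iUnion fun N => (hitm N) (hSm N)
  have hprop : ∀ M x, T^[M] x ∈ S M → T^[M+1] x ∈ S (M+1) := by
    intro M x hx
    simp only [hS, mem_iUnion] at hx ⊢
    obtain ⟨k, hk⟩ := hx
    refine ⟨k, ?_⟩
    have h1 := hA _ _ hk
    rw [Function.iterate_succ_apply']
    have e1 : 2*k + (M+1) = 2*k + M + 1 := by omega
    rw [e1]
    exact h1
  have hprop' : ∀ j M x, T^[M] x ∈ S M → T^[M+j] x ∈ S (M+j) := by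
    intro j
    induction j with
    | zero => intro M x h; exact h
    | succ j ih =>
      intro M x h
      have e : M + (j+1) = (M + j) + 1 := by omega
      rw [e]
      exact hprop _ _ (ih M x h)
  have htail : ∀ n : ℕ, ∃ t : Set ℝ, MeasurableSet t ∧ s = (T^[n]) ⁻¹' t := by
    intro n
    refine ⟨⋃ N : ℕ, T^[N] ⁻¹' S (N + n),
      MeasurableSet.iUnion fun N => (hitm N) (hSm _), ?_⟩
    ext x
    simp only [hs, mem_iUnion, mem_preimage]
    constructor
    · rintro ⟨M, hM⟩
      refine ⟨M, ?_⟩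
      rw [← Function.iterate_add_apply]
      exact hprop' n M x hM
    · rintro ⟨N, hN⟩
      rw [← Function.iterate_add_apply] at hN
      exact ⟨N + n, hN⟩
  rcases hexact s hsm htail with h0 | h1
  · -- s contains Ico (c 0) (c 1), of positive measure
    have hsub0 : Ico (c 0) (c 1) ⊆ s := by
      intro y hy
      simp only [hs, mem_iUnion, mem_preimage]
      refine ⟨0, ?_⟩
      simp only [hS, mem_iUnion, Function.iterate_zero_apply]
      exact ⟨0, by simpa using hy⟩
    have hnull := measure_mono_null hsub0 h0
    rw [Measure.restrict_apply measurableSet_Ico] at hnull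
    have hin : Ico (c 0) (c 1) ∩ Ici 0 = Ico (c 0) (c 1) := by
      apply inter_eq_left.mpr
      intro y hy
      have : (0:ℝ) ≤ c 0 := by rw [hc0]; linarith [ha₁, hx₀']
      exact le_trans this hy.1
    rw [hin, Real.volume_Ico] at hnull
    rw [ENNReal.ofReal_eq_zero] at hnull
    have := hclt 0
    linarith
  · -- sᶜ contains Ico (c 1) (c 2), of positive measure
    have hsub1 : Ico (c 1) (c (1+1)) ⊆ sᶜ := by
      intro y hy hy'
      simp only [hs, mem_iUnion, mem_preimage] at hy'
      obtain ⟨N, hN⟩ := hy'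
      simp only [hS, mem_iUnion] at hN
      obtain ⟨k, hk⟩ := hN
      have h1 := hiter N 1 y hy
      have := hdisj _ _ _ hk h1
      omega
    have hnull := measure_mono_null hsub1 h1
    rw [Measure.restrict_apply measurableSet_Ico] at hnull
    have hin : Ico (c 1) (c (1+1)) ∩ Ici 0 = Ico (c 1) (c (1+1)) := by
      apply inter_eq_left.mpr
      intro y hy
      have h0' : (0:ℝ) ≤ c 0 := by rw [hc0]; linarith [ha₁, hx₀']
      have := hcsm.monotone (show (0:ℕ) ≤ 1 by omega)
      exact le_trans (le_trans h0' this) hy.1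
    rw [hin, Real.volume_Ico] at hnull
    rw [ENNReal.ofReal_eq_zero] at hnull
    have := hclt 1
    linarith
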